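/- An SITL formula φ is satisfiable (there exists x : ℝ≥0 → ℝⁿ with (x,0) ⊨ φ) if and only if there exists a Boolean signal d : ℝ≥0 → 𝔹^M with (d,0) ⊨ Pr(φ) such that at each time t the valuation d(t) is predicate-consistent, i.e., there exists z ∈ ℝⁿ with (h_i(z) ≥ 0 ↔ proj_{p_i}(d(t)) = ⊤) for all i. -/
import Mathlib


open scoped NNReal

/-- MITL syntax over propositions `P`, with interval-constrained until. -/
inductive MITL (P : Type) where
  | tt : MITL P
  | atom : P → MITL P
  | not : MITL P → MITL P
  | and : MITL P → MITL P → MITL P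
  | untl : Set ℝ≥0 → MITL P → MITL P → MITL P

/-- Continuous-time MITL semantics over Boolean signals `d : ℝ≥0 → P → Bool`. -/
def MITL.sat {P : Type} (d : ℝ≥0 → P → Bool) : MITL P → ℝ≥0 → Prop
  | .tt, _ => True
  | .atom p, t => d t p = true
  | .not φ, t => ¬ MITL.sat d φ t
  | .and φ ψ, t => MITL.sat d φ t ∧ MITL.sat d ψ t
  | .untl I φ ψ, t => ∃ t'' ∈ (fun s => t + s) '' I,
      MITL.sat d ψ t'' ∧ ∀ t' ∈ Set.Ioo t t'', MITL.sat d φ t'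

/-- Disjunction `φ ∨ ψ := ¬(¬φ ∧ ¬ψ)`. -/
def MITL.or {P : Type} (φ ψ : MITL P) : MITL P := .not (.and (.not φ) (.not ψ))

/-- Eventually `F_I φ := ⊤ U_I φ`. -/
def MITL.ev {P : Type} (I : Set ℝ≥0) (φ : MITL P) : MITL P := .untl I .tt φ

/-- Always `G_I φ := ¬ F_I ¬φ`. -/
def MITL.alw {P : Type} (I : Set ℝ≥0) (φ : MITL P) : MITL P := .not (.ev I (.not φ))

/-- SITL semantics: the same syntax interpreted over real-valued signals
`x : ℝ≥0 → ℝⁿ`, where atom `i` (predicate `μ_i`) holds at `t` iff `h i (x t) ≥ 0`. -/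
def SITL.sat {M n : ℕ} (h : Fin M → (Fin n → ℝ) → ℝ) (x : ℝ≥0 → Fin n → ℝ) :
    MITL (Fin M) → ℝ≥0 → Prop
  | .tt, _ => True
  | .atom i, t => 0 ≤ h i (x t)
  | .not φ, t => ¬ SITL.sat h x φ t
  | .and φ ψ, t => SITL.sat h x φ t ∧ SITL.sat h x ψ t
  | .untl I φ ψ, t => ∃ t'' ∈ (fun s => t + s) '' I,
      SITL.sat h x ψ t'' ∧ ∀ t' ∈ Set.Ioo t t'', SITL.sat h x φ t'

/-- An SITL formula `φ` is satisfiable iff there is a Boolean signal `d` with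
`(d,0) ⊨ Pr(φ)` whose valuation is predicate-consistent at every time, i.e. at each `t`
some `z ∈ ℝⁿ` realizes exactly the truth values `d(t)`. -/

theorem sat_congr {M n : ℕ} (h : Fin M → (Fin n → ℝ) → ℝ) (x : ℝ≥0 → Fin n → ℝ)
    (d : ℝ≥0 → Fin M → Bool) (hc : ∀ t i, (0 ≤ h i (x t) ↔ d t i = true)) :
    ∀ (ψ : MITL (Fin M)) (t : ℝ≥0), SITL.sat h x ψ t ↔ MITL.sat d ψ t := by
  intro ψ
  induction ψ with
  | tt => intro t; simp [SITL.sat, MITL.sat]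
  | atom i => intro t; simpa [SITL.sat, MITL.sat] using hc t i
  | not φ ih => intro t; simp [SITL.sat, MITL.sat, ih]
  | and φ ψ ih1 ih2 => intro t; simp [SITL.sat, MITL.sat, ih1, ih2]
  | untl I φ ψ ih1 ih2 =>
      intro t
      simp only [SITL.sat, MITL.sat]
      constructor
      · rintro ⟨t'', ht'', hψ, hφ⟩
        exact ⟨t'', ht'', (ih2 t'').mp hψ, fun t' ht' => (ih1 t').mp (hφ t' ht')⟩
      · rintro ⟨t'', ht'', hψ, hφ⟩
        exact ⟨t'', ht'', (ih2 t'').mpr hψ, fun t' ht' => (ih1 t').mpr (hφ t' ht')⟩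

theorem sitl_satisfiable_iff {M n : ℕ} (h : Fin M → (Fin n → ℝ) → ℝ)
    (φ : MITL (Fin M)) :
    (∃ x : ℝ≥0 → Fin n → ℝ, SITL.sat h x φ 0) ↔
      (∃ d : ℝ≥0 → Fin M → Bool, MITL.sat d φ 0 ∧
        ∀ t, ∃ z : Fin n → ℝ, ∀ i, (0 ≤ h i z ↔ d t i = true)) := by
  constructor
  · rintro ⟨x, hx⟩
    refine ⟨fun t i => decide (0 ≤ h i (x t)), ?_, fun t => ⟨x t, fun i => by simp⟩⟩
    exact (sat_congr h x _ (fun t i => by simp) φ 0).mp hx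
  · rintro ⟨d, hd, hcons⟩
    choose z hz using hcons
    exact ⟨z, (sat_congr h z d hz φ 0).mpr hd⟩
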